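/- Let g be a generator of M, let x, y ∈ M, let r ≥ 0 be a regularized rate from x to y, and let f be a functional on M. Then f(x) ≥ r·f(y). -/

import Mathlib

/-- A functional on a preordered commutative monoid: additive and monotone. -/
def IsFunctional {M : Type*} [CommMonoid M] [Preorder M] (f : M → ℝ) : Prop :=
  (∀ x y : M, f (x * y) = f x + f y) ∧ (∀ x y : M, x ≤ y → f x ≤ f y)

/-- `g` is a generator: every element is below some power of `g`. -/
def IsGenerator {M : Type*} [CommMonoid M] [Preorder M] (g : M) : Prop :=
  ∀ x : M, ∃ n : ℕ, x ≤ g ^ n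

/-- `r` is a regularized rate from `x` to `y` (relative to the generator `g`). -/
def IsRegularizedRate {M : Type*} [CommMonoid M] [Preorder M] (g x y : M) (r : ℝ) : Prop :=
  ∀ δ : ℝ, 0 < δ → ∀ U ∈ nhds r, ∃ m n : ℕ, 1 ≤ n ∧ ((m : ℝ) / (n : ℝ)) ∈ U ∧
    ∃ d : ℕ, (d : ℝ) ≤ δ * max (m : ℝ) (n : ℝ) ∧ y ^ m ≤ x ^ n * g ^ d

theorem statement1 {M : Type*} [CommMonoid M] [Preorder M]
    (hmul : ∀ x y z : M, x ≤ y → x * z ≤ y * z)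
    (hone : ∀ x : M, (1 : M) ≤ x)
    (g : M) (hg : IsGenerator g) (x y : M) (r : ℝ) (hr : 0 ≤ r)
    (hrate : IsRegularizedRate g x y r)
    (f : M → ℝ) (hf : IsFunctional f) :
    r * f y ≤ f x := by
  obtain ⟨hadd, hmono⟩ := hf
  have f1 : f 1 = 0 := by
    have := hadd 1 1
    rw [mul_one] at this
    linarith
  have fpow : ∀ (a : M) (k : ℕ), f (a ^ k) = (k : ℝ) * f a := by
    intro a k
    induction k with
    | zero => simp [f1]
    | succ k ih => rw [pow_succ, hadd, ih]; push_cast; ring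
  have fnn : ∀ a : M, 0 ≤ f a := by
    intro a
    have := hmono _ _ (hone a)
    rwa [f1] at this
  have hfy := fnn y
  have hfg := fnn g
  set C : ℝ := f y + (r + 2) * f g with hC
  have hCnn : 0 ≤ C := by
    have : 0 ≤ (r + 2) * f g := mul_nonneg (by linarith) hfg
    simp [hC]; linarith
  have key : ∀ ε : ℝ, 0 < ε → ε ≤ 1 → r * f y ≤ f x + ε * C := by
    intro ε hε hε1
    obtain ⟨m, n, hn, hmem, d, hd, hle⟩ :=
      hrate ε hε (Metric.ball r ε) (Metric.ball_mem_nhds r hε)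
    have hn1 : (1 : ℝ) ≤ (n : ℝ) := by exact_mod_cast hn
    have hnpos : (0 : ℝ) < n := by linarith
    rw [Metric.mem_ball, Real.dist_eq, abs_sub_lt_iff] at hmem
    obtain ⟨h1, h2⟩ := hmem
    have hm1 : (m : ℝ) < (r + ε) * n := by
      have : (m : ℝ) / n < r + ε := by linarith
      calc (m : ℝ) = ((m : ℝ) / n) * n := by field_simp
        _ < (r + ε) * n := by
          apply mul_lt_mul_of_pos_right this hnpos
    have hm2 : (r - ε) * n < (m : ℝ) := by
      have : r - ε < (m : ℝ) / n := by linarith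
      calc (r - ε) * n < ((m : ℝ) / n) * n := mul_lt_mul_of_pos_right this hnpos
        _ = (m : ℝ) := by field_simp
    have hmax : max (m : ℝ) (n : ℝ) ≤ (r + 2) * n := by
      apply max_le
      · nlinarith
      · nlinarith
    have hd' : (d : ℝ) ≤ ε * ((r + 2) * n) := by
      calc (d : ℝ) ≤ ε * max (m : ℝ) (n : ℝ) := hd
        _ ≤ ε * ((r + 2) * n) := by
          apply mul_le_mul_of_nonneg_left hmax hε.le
    have main : (m : ℝ) * f y ≤ (n : ℝ) * f x + (d : ℝ) * f g := by
      have := hmono _ _ hle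
      rw [fpow, hadd, fpow, fpow] at this
      linarith
    have h3 : (r - ε) * n * f y ≤ (m : ℝ) * f y :=
      mul_le_mul_of_nonneg_right hm2.le hfy
    have h4 : (d : ℝ) * f g ≤ ε * ((r + 2) * n) * f g :=
      mul_le_mul_of_nonneg_right hd' hfg
    -- (r - ε) * n * f y ≤ n * f x + ε * (r+2) * n * f g, divide by n
    have h5 : (n : ℝ) * (r * f y) ≤ (n : ℝ) * (f x + ε * C) := by
      simp only [hC]
      nlinarith [mul_nonneg hε.le (mul_nonneg hnpos.le hfy)]
    exact le_of_mul_le_mul_left h5 hnpos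
  -- conclude by letting ε → 0
  by_contra h
  push_neg at h
  set Δ : ℝ := r * f y - f x with hΔ
  have hΔpos : 0 < Δ := by simp [hΔ]; linarith
  have hεpos : 0 < min 1 (Δ / (2 * (C + 1))) := by
    apply lt_min one_pos
    positivity
  have := key _ hεpos (min_le_left _ _)
  have hle2 : min 1 (Δ / (2 * (C + 1))) * C ≤ Δ / 2 := by
    calc min 1 (Δ / (2 * (C + 1))) * C ≤ (Δ / (2 * (C + 1))) * (C + 1) := by
          apply mul_le_mul (min_le_right _ _) (by linarith) hCnn
          positivity
      _ = Δ / 2 := by field_simp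
  linarith
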